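/- Let d ≥ 1, h > 0, and let u : ℝ^d → [0,1] be measurable and Lebesgue integrable. Then ∫_{ℝ^d} ∫_{ℝ^d} exp(3|z|²/8)·G_1(z)·(1/√h)·( (1−u)(x)·u(x − √h·z) + u(x)·(1−u)(x − √h·z) ) dz dx ≤ (2^{d+2}/√h)·( ∫_{ℝ^d} u dx − ∫_{ℝ^d} u·(G_h ⋆ u) dx ). Equivalently, the left-hand side equals 2^{d+2}·E_{4h}(u) and is bounded by 2^{d+2}·E_h(u), where E_h(u) = (1/√h)·∫ (1−u)·(G_h ⋆ u) dx. -/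

import Mathlib

open MeasureTheory
open scoped ENNReal

/-- The Gaussian heat kernel `G_h(z) = (2πh)^{-d/2} exp(-|z|²/(2h))` on `ℝ^d`. -/
noncomputable def gauss (d : ℕ) (h : ℝ) (z : EuclideanSpace ℝ (Fin d)) : ℝ :=
  (2 * Real.pi * h) ^ (-(d : ℝ) / 2) * Real.exp (-‖z‖ ^ 2 / (2 * h))

/-- Convolution of two functions on `ℝ^d` w.r.t. Lebesgue measure. -/
noncomputable def conv (d : ℕ) (f g : EuclideanSpace ℝ (Fin d) → ℝ)
    (x : EuclideanSpace ℝ (Fin d)) : ℝ :=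
  ∫ y, f (x - y) * g y

namespace Stmt15Aux

variable {d : ℕ}


/-- Scaling of Lebesgue integrals on `ℝ^d` in `ℝ≥0∞`. -/
lemma lint_smul (g : (EuclideanSpace ℝ (Fin d)) → ℝ≥0∞) (hg : Measurable g) {R : ℝ} (hR : 0 < R) :
    ∫⁻ x, g x = ENNReal.ofReal (R ^ d) * ∫⁻ x, g (R • x) := by
  have hmap : Measure.map (fun x : (EuclideanSpace ℝ (Fin d)) => R • x) volume
      = ENNReal.ofReal |(R ^ d)⁻¹| • volume := by
    rw [Measure.map_addHaar_smul volume hR.ne', finrank_euclideanSpace_fin]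
  have h1 : ∫⁻ x, g (R • x) = ∫⁻ y, g y ∂(Measure.map (fun x : (EuclideanSpace ℝ (Fin d)) => R • x) volume) := by
    rw [lintegral_map hg (measurable_const_smul R)]
  rw [h1, hmap, lintegral_smul_measure, smul_eq_mul, ← mul_assoc, abs_of_nonneg (by positivity),
    ← ENNReal.ofReal_mul (by positivity), mul_inv_cancel₀ (by positivity), ENNReal.ofReal_one,
    one_mul]

/-- The key three-point inequality for values in `[0,1]`. -/
lemma tri {a b c : ℝ} (ha : a ∈ Set.Icc (0:ℝ) 1) (hb : b ∈ Set.Icc (0:ℝ) 1)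
    (hc : c ∈ Set.Icc (0:ℝ) 1) : a * (1 - c) ≤ a * (1 - b) + b * (1 - c) := by
  rcases le_total a b with hab | hab
  · nlinarith [mul_nonneg ha.1 (sub_nonneg.2 hb.2),
      mul_nonneg (sub_nonneg.2 hab) (sub_nonneg.2 hc.2)]
  · nlinarith [mul_nonneg hb.1 (sub_nonneg.2 ha.2), mul_nonneg hc.1 (sub_nonneg.2 hab)]

lemma gauss_meas (h : ℝ) : Measurable (gauss d h) := by
  unfold gauss
  exact measurable_const.mul (((measurable_norm.pow_const 2).neg.div_const _).exp)

lemma gauss_nonneg {h : ℝ} (hh : 0 < h) (z : (EuclideanSpace ℝ (Fin d))) : 0 ≤ gauss d h z := by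
  unfold gauss; positivity

lemma gauss_neg (h : ℝ) (z : (EuclideanSpace ℝ (Fin d))) : gauss d h (-z) = gauss d h z := by
  unfold gauss; rw [norm_neg]


lemma gauss_rw {h : ℝ} (hh : 0 < h) (z : EuclideanSpace ℝ (Fin d)) :
    gauss d h z = (2 * Real.pi * h) ^ (-(d : ℝ) / 2) * Real.exp (-(1/(2*h)) * ‖z‖ ^ 2) := by
  unfold gauss
  congr 1
  rw [neg_div, neg_mul]
  congr 1
  field_simp

lemma gauss_integrable {h : ℝ} (hh : 0 < h) : Integrable (gauss d h) := by
  have hb : (0:ℝ) < 1/(2*h) := by positivity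
  have hexp : Integrable (fun v : EuclideanSpace ℝ (Fin d) => Real.exp (-(1/(2*h)) * ‖v‖^2)) := by
    have h1 := (GaussianFourier.integrable_cexp_neg_mul_sq_norm_add
      (V := EuclideanSpace ℝ (Fin d)) (b := ((1/(2*h) : ℝ) : ℂ)) (by simpa using hb) 0 0).norm
    apply h1.congr
    filter_upwards with v
    rw [Complex.norm_exp,
      show (-((1/(2*h):ℝ):ℂ) * (‖v‖:ℂ)^2 + 0 * ((inner ℝ (0 : EuclideanSpace ℝ (Fin d)) v : ℝ) : ℂ))
          = ((-(1/(2*h))*‖v‖^2 : ℝ) : ℂ) by push_cast; ring,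
      Complex.ofReal_re]
  exact (hexp.const_mul _).congr (Filter.Eventually.of_forall fun z => (gauss_rw hh z).symm)

lemma gauss_integral {h : ℝ} (hh : 0 < h) : ∫ z : EuclideanSpace ℝ (Fin d), gauss d h z = 1 := by
  have hb : (0:ℝ) < 1/(2*h) := by positivity
  have h2 : ∫ z : EuclideanSpace ℝ (Fin d), gauss d h z
      = (2 * Real.pi * h) ^ (-(d : ℝ) / 2) *
        ∫ z : EuclideanSpace ℝ (Fin d), Real.exp (-(1/(2*h)) * ‖z‖^2) := by
    rw [← integral_const_mul]
    exact integral_congr_ae (Filter.Eventually.of_forall fun z => gauss_rw hh z)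
  rw [h2, GaussianFourier.integral_rexp_neg_mul_sq_norm hb, finrank_euclideanSpace_fin,
    show Real.pi / (1/(2*h)) = 2 * Real.pi * h by field_simp,
    ← Real.rpow_add (by positivity : (0:ℝ) < 2 * Real.pi * h)]
  rw [neg_div, neg_add_cancel, Real.rpow_zero]

lemma gauss_scale {h : ℝ} (hh : 0 < h) (y : EuclideanSpace ℝ (Fin d)) :
    (Real.sqrt h) ^ d * gauss d h (Real.sqrt h • y) = gauss d 1 y := by
  have hs : 0 < Real.sqrt h := Real.sqrt_pos.2 hh
  unfold gauss
  have hns : ‖Real.sqrt h • y‖ ^ 2 = h * ‖y‖ ^ 2 := by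
    rw [norm_smul, Real.norm_eq_abs, abs_of_nonneg hs.le, mul_pow, Real.sq_sqrt hh.le]
  rw [hns, show -(h * ‖y‖ ^ 2) / (2 * h) = -‖y‖ ^ 2 / (2 * 1) by field_simp, ← mul_assoc]
  congr 1
  have h1 : (Real.sqrt h) ^ d = h ^ ((d : ℝ) / 2) := by
    rw [Real.sqrt_eq_rpow, ← Real.rpow_natCast (h ^ ((1:ℝ)/2)) d, ← Real.rpow_mul hh.le]
    congr 1
    ring
  rw [h1, Real.mul_rpow (by positivity) hh.le, mul_one]
  rw [mul_comm, mul_assoc, ← Real.rpow_add hh]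
  rw [show (-(d:ℝ)/2 + (d:ℝ)/2) = 0 by ring, Real.rpow_zero, mul_one]

lemma k_scale (y : EuclideanSpace ℝ (Fin d)) :
    Real.exp (3 * ‖(2:ℝ) • y‖ ^ 2 / 8) * gauss d 1 ((2:ℝ) • y) = gauss d 1 y := by
  unfold gauss
  have h4 : ‖(2:ℝ) • y‖ ^ 2 = 4 * ‖y‖ ^ 2 := by
    rw [norm_smul, Real.norm_eq_abs, mul_pow]
    norm_num
  rw [h4, mul_left_comm, ← Real.exp_add]
  congr 1
  ring

section U


variable (u : (EuclideanSpace ℝ (Fin d)) → ℝ)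

/-- `Fl u w = ∫⁻ u(x)(1 - u(x-w)) dx`. -/
noncomputable def Fl (w : (EuclideanSpace ℝ (Fin d))) : ℝ≥0∞ := ∫⁻ x, ENNReal.ofReal (u x * (1 - u (x - w)))

variable {u}

lemma meas_prod (hm : Measurable u) :
    Measurable (fun p : (EuclideanSpace ℝ (Fin d)) × (EuclideanSpace ℝ (Fin d)) => ENNReal.ofReal (u p.2 * (1 - u (p.2 - p.1)))) :=
  ((hm.comp measurable_snd).mul
    (measurable_const.sub (hm.comp (measurable_snd.sub measurable_fst)))).ennreal_ofReal

lemma Fl_integrand_meas (hm : Measurable u) (w : (EuclideanSpace ℝ (Fin d))) :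
    Measurable (fun x : (EuclideanSpace ℝ (Fin d)) => ENNReal.ofReal (u x * (1 - u (x - w)))) :=
  (hm.mul (measurable_const.sub (hm.comp (measurable_sub_const w)))).ennreal_ofReal

lemma Fl_meas (hm : Measurable u) : Measurable (Fl u) :=
  (meas_prod hm).lintegral_prod_right'

/-- Translation: the "mirror" integrand integrates to `Fl u (-w)`. -/
lemma Fl_trans (hm : Measurable u) (w : (EuclideanSpace ℝ (Fin d))) :
    ∫⁻ x, ENNReal.ofReal ((1 - u x) * u (x - w)) = Fl u (-w) := by
  have hg : Measurable fun x : (EuclideanSpace ℝ (Fin d)) => ENNReal.ofReal ((1 - u x) * u (x - w)) :=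
    ((measurable_const.sub hm).mul (hm.comp (measurable_sub_const w))).ennreal_ofReal
  have h1 := (measurePreserving_add_right (volume : Measure (EuclideanSpace ℝ (Fin d))) w).lintegral_comp hg
  rw [← h1]
  unfold Fl
  congr 1 with x
  rw [add_sub_cancel_right, sub_neg_eq_add, mul_comm]

/-- Subadditivity consequence: `Fl u (w + w) ≤ 2 * Fl u w`. -/
lemma Fl_half (hm : Measurable u) (hr : ∀ x, u x ∈ Set.Icc (0:ℝ) 1) (w : (EuclideanSpace ℝ (Fin d))) :
    Fl u (w + w) ≤ 2 * Fl u w := by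
  have hnn : ∀ a b : (EuclideanSpace ℝ (Fin d)), 0 ≤ u a * (1 - u b) := fun a b =>
    mul_nonneg (hr a).1 (sub_nonneg.2 (hr b).2)
  have step1 : Fl u (w + w) ≤ ∫⁻ x, (ENNReal.ofReal (u x * (1 - u (x - w)))
      + ENNReal.ofReal (u (x - w) * (1 - u (x - w - w)))) := by
    apply lintegral_mono
    intro x
    calc ENNReal.ofReal (u x * (1 - u (x - (w + w))))
        ≤ ENNReal.ofReal (u x * (1 - u (x - w)) + u (x - w) * (1 - u (x - w - w))) := by
          apply ENNReal.ofReal_le_ofReal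
          rw [sub_add_eq_sub_sub]
          exact tri (hr x) (hr (x - w)) (hr (x - w - w))
      _ = _ := ENNReal.ofReal_add (hnn _ _) (hnn _ _)
  have h2 : (∫⁻ x, ENNReal.ofReal (u (x - w) * (1 - u (x - w - w)))) = Fl u w := by
    have hg : Measurable fun x : (EuclideanSpace ℝ (Fin d)) => ENNReal.ofReal (u (x - w) * (1 - u (x - w - w))) :=
      ((hm.comp (measurable_sub_const w)).mul
        (measurable_const.sub (hm.comp ((measurable_sub_const w).sub_const w)))).ennreal_ofReal
    have h1 := (measurePreserving_add_right (volume : Measure (EuclideanSpace ℝ (Fin d))) w).lintegral_comp hg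
    rw [← h1]
    unfold Fl
    congr 1 with x
    rw [add_sub_cancel_right]
  calc Fl u (w + w) ≤ _ := step1
    _ = Fl u w + Fl u w := by
        rw [lintegral_add_left (Fl_integrand_meas hm w), h2]; rfl
    _ = 2 * Fl u w := (two_mul _).symm

end U

end Stmt15Aux

open Stmt15Aux in
theorem stmt_15 (d : ℕ) (hd : 1 ≤ d) (h : ℝ) (hh : 0 < h)
    (u : EuclideanSpace ℝ (Fin d) → ℝ)
    (hu_meas : Measurable u) (hu_range : ∀ x, u x ∈ Set.Icc (0 : ℝ) 1)
    (hu_int : Integrable u) :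
    (∫⁻ x, ∫⁻ z, ENNReal.ofReal
        (Real.exp (3 * ‖z‖ ^ 2 / 8) * gauss d 1 z * (1 / Real.sqrt h) *
          ((1 - u x) * u (x - Real.sqrt h • z) + u x * (1 - u (x - Real.sqrt h • z)))))
      ≤ ENNReal.ofReal ((2 ^ (d + 2) / Real.sqrt h) *
          ((∫ x, u x) - ∫ x, u x * conv d (gauss d h) u x)) := by
  have hs : 0 < Real.sqrt h := Real.sqrt_pos.2 hh
  have hpnn : ∀ a b : EuclideanSpace ℝ (Fin d), 0 ≤ u a * (1 - u b) := fun a b =>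
    mul_nonneg (hu_range a).1 (sub_nonneg.2 (hu_range b).2)
  have hqnn : ∀ a b : EuclideanSpace ℝ (Fin d), 0 ≤ (1 - u a) * u b := fun a b =>
    mul_nonneg (sub_nonneg.2 (hu_range a).2) (hu_range b).1
  have hp1 : ∀ a b : EuclideanSpace ℝ (Fin d), u a * (1 - u b) ≤ 1 := fun a b =>
    mul_le_one₀ (hu_range a).2 (sub_nonneg.2 (hu_range b).2) (by linarith [(hu_range b).1])
  have hG1nn : ∀ z : EuclideanSpace ℝ (Fin d), 0 ≤ gauss d 1 z := gauss_nonneg one_pos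
  have hGhnn : ∀ z : EuclideanSpace ℝ (Fin d), 0 ≤ gauss d h z := gauss_nonneg hh
  have hG1m : Measurable (gauss (d := d) 1) := gauss_meas 1
  have hGhm : Measurable (gauss (d := d) h) := gauss_meas h
  have hFlm : Measurable (Fl u) := Fl_meas hu_meas
  ---------------------------------------------------------------
  -- Part 1 : the right-hand side
  ---------------------------------------------------------------
  have hGh_int : Integrable (gauss d h) := gauss_integrable hh
  have hGh_sum : ∫ z : EuclideanSpace ℝ (Fin d), gauss d h z = 1 := gauss_integral hh
  have hcomp_int : ∀ x : EuclideanSpace ℝ (Fin d), Integrable (fun y => gauss d h (x - y)) :=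
    fun x => hGh_int.comp_sub_left x
  have hC_meas : Measurable (conv d (gauss d h) u) := by
    unfold conv
    exact ((hGhm.comp (measurable_fst.sub measurable_snd)).mul
      (hu_meas.comp measurable_snd)).stronglyMeasurable.integral_prod_right'.measurable
  have huy_int : ∀ x : EuclideanSpace ℝ (Fin d),
      Integrable fun y => gauss d h (x - y) * u y := by
    intro x
    refine (hcomp_int x).mono
      ((hGhm.comp (measurable_const.sub measurable_id)).mul hu_meas).aestronglyMeasurable
      (Filter.Eventually.of_forall fun y => ?_)
    rw [norm_mul]
    refine mul_le_of_le_one_right (norm_nonneg _) ?_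
    rw [Real.norm_eq_abs, abs_le]
    exact ⟨by linarith [(hu_range y).1], (hu_range y).2⟩
  have hC_nonneg : ∀ x, 0 ≤ conv d (gauss d h) u x := fun x =>
    integral_nonneg fun y => mul_nonneg (hGhnn _) (hu_range y).1
  have hC_le_one : ∀ x, conv d (gauss d h) u x ≤ 1 := by
    intro x
    have h1 : conv d (gauss d h) u x ≤ ∫ y, gauss d h (x - y) := by
      refine integral_mono (huy_int x) (hcomp_int x) fun y => ?_
      exact mul_le_of_le_one_right (hGhnn _) (hu_range y).2
    calc conv d (gauss d h) u x ≤ _ := h1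
      _ = 1 := by rw [integral_sub_left_eq_self (gauss d h) volume x, hGh_sum]
  have huC_int : Integrable fun x => u x * conv d (gauss d h) u x := by
    refine hu_int.mono ((hu_meas.mul hC_meas).aestronglyMeasurable)
      (Filter.Eventually.of_forall fun x => ?_)
    rw [norm_mul]
    refine mul_le_of_le_one_right (norm_nonneg _) ?_
    rw [Real.norm_eq_abs, abs_le]
    exact ⟨by linarith [hC_nonneg x], hC_le_one x⟩
  have hkey : ∀ x, u x * (1 - conv d (gauss d h) u x)
      = ∫ y, gauss d h (x - y) * (u x * (1 - u y)) := by
    intro x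
    have h1 : (1:ℝ) - conv d (gauss d h) u x = ∫ y, gauss d h (x - y) * (1 - u y) := by
      have h2 : ∫ y, gauss d h (x - y) * (1 - u y)
          = (∫ y, gauss d h (x - y)) - ∫ y, gauss d h (x - y) * u y := by
        rw [← integral_sub (hcomp_int x) (huy_int x)]
        exact integral_congr_ae (Filter.Eventually.of_forall fun y => by ring)
      rw [h2, integral_sub_left_eq_self (gauss d h) volume x, hGh_sum]
      rfl
    rw [h1, ← integral_const_mul]
    exact integral_congr_ae (Filter.Eventually.of_forall fun y => by ring)
  have hr_int : Integrable fun x => u x * (1 - conv d (gauss d h) u x) :=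
    (hu_int.sub huC_int).congr (Filter.Eventually.of_forall fun x => by
      simp only [Pi.sub_apply]; ring)
  have hr_eq : (∫ x, u x) - (∫ x, u x * conv d (gauss d h) u x)
      = ∫ x, u x * (1 - conv d (gauss d h) u x) := by
    rw [← integral_sub hu_int huC_int]
    exact integral_congr_ae (Filter.Eventually.of_forall fun x => by ring)
  have hofr : ENNReal.ofReal ((∫ x, u x) - ∫ x, u x * conv d (gauss d h) u x)
      = ∫⁻ x, ENNReal.ofReal (u x * (1 - conv d (gauss d h) u x)) := by
    rw [hr_eq]
    exact ofReal_integral_eq_lintegral_ofReal hr_int (Filter.Eventually.of_forall fun x =>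
      mul_nonneg (hu_range x).1 (sub_nonneg.2 (hC_le_one x)))
  have hptw : ∀ x, ENNReal.ofReal (u x * (1 - conv d (gauss d h) u x))
      = ∫⁻ w, ENNReal.ofReal (gauss d h w * (u x * (1 - u (x - w)))) := by
    intro x
    have hint : Integrable fun y => gauss d h (x - y) * (u x * (1 - u y)) := by
      refine (hcomp_int x).mono
        ((hGhm.comp (measurable_const.sub measurable_id)).mul
          (measurable_const.mul (measurable_const.sub hu_meas))).aestronglyMeasurable
        (Filter.Eventually.of_forall fun y => ?_)
      rw [norm_mul]
      refine mul_le_of_le_one_right (norm_nonneg _) ?_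
      rw [Real.norm_eq_abs, abs_le]
      exact ⟨by linarith [hpnn x y], hp1 x y⟩
    rw [hkey x, ofReal_integral_eq_lintegral_ofReal hint
      (Filter.Eventually.of_forall fun y => mul_nonneg (hGhnn _) (hpnn x y))]
    have hgm : Measurable fun y : EuclideanSpace ℝ (Fin d) =>
        ENNReal.ofReal (gauss d h (x - y) * (u x * (1 - u y))) :=
      ((hGhm.comp (measurable_const.sub measurable_id)).mul
        (measurable_const.mul (measurable_const.sub hu_meas))).ennreal_ofReal
    have hmp := (Measure.measurePreserving_sub_left
      (volume : Measure (EuclideanSpace ℝ (Fin d))) x).lintegral_comp hgm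
    rw [← hmp]
    refine lintegral_congr fun w => ?_
    rw [sub_sub_cancel]
  have hjoint2 : Measurable fun p : (EuclideanSpace ℝ (Fin d)) × (EuclideanSpace ℝ (Fin d)) =>
      ENNReal.ofReal (gauss d h p.2 * (u p.1 * (1 - u (p.1 - p.2)))) :=
    ((hGhm.comp measurable_snd).mul
      ((hu_meas.comp measurable_fst).mul
        (measurable_const.sub (hu_meas.comp (measurable_fst.sub measurable_snd))))).ennreal_ofReal
  have hswap2 : (∫⁻ x, ∫⁻ w, ENNReal.ofReal (gauss d h w * (u x * (1 - u (x - w)))))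
      = ∫⁻ w, ∫⁻ x, ENNReal.ofReal (gauss d h w * (u x * (1 - u (x - w)))) :=
    lintegral_lintegral_swap hjoint2.aemeasurable
  have hpull : ∀ w, (∫⁻ x, ENNReal.ofReal (gauss d h w * (u x * (1 - u (x - w)))))
      = ENNReal.ofReal (gauss d h w) * Fl u w := by
    intro w
    simp_rw [ENNReal.ofReal_mul (hGhnn w)]
    rw [lintegral_const_mul _ (Fl_integrand_meas hu_meas w)]
    rfl
  have hRf : ENNReal.ofReal ((∫ x, u x) - ∫ x, u x * conv d (gauss d h) u x)
      = ∫⁻ w, ENNReal.ofReal (gauss d h w) * Fl u w := by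
    rw [hofr, lintegral_congr hptw, hswap2]
    exact lintegral_congr hpull
  -- scaling w = √h • y
  have hmeasGhFl : Measurable fun w : EuclideanSpace ℝ (Fin d) =>
      ENNReal.ofReal (gauss d h w) * Fl u w :=
    (hGhm.ennreal_ofReal).mul hFlm
  have hJ : ENNReal.ofReal ((∫ x, u x) - ∫ x, u x * conv d (gauss d h) u x)
      = ∫⁻ y, ENNReal.ofReal (gauss d 1 y) * Fl u (Real.sqrt h • y) := by
    have hsy : Measurable fun y : EuclideanSpace ℝ (Fin d) =>
        ENNReal.ofReal (gauss d h (Real.sqrt h • y)) * Fl u (Real.sqrt h • y) :=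
      ((hGhm.comp (measurable_id.const_smul (Real.sqrt h))).ennreal_ofReal).mul
        (hFlm.comp (measurable_id.const_smul (Real.sqrt h)))
    rw [hRf, lint_smul _ hmeasGhFl hs, ← lintegral_const_mul _ hsy]
    refine lintegral_congr fun y => ?_
    rw [← mul_assoc, ← ENNReal.ofReal_mul (by positivity), gauss_scale hh y]
  have hHm : Measurable fun y : EuclideanSpace ℝ (Fin d) =>
      ENNReal.ofReal (gauss d 1 y) * Fl u (Real.sqrt h • y) :=
    (hG1m.ennreal_ofReal).mul (hFlm.comp (measurable_id.const_smul (Real.sqrt h)))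
  have hJneg : ENNReal.ofReal ((∫ x, u x) - ∫ x, u x * conv d (gauss d h) u x)
      = ∫⁻ y, ENNReal.ofReal (gauss d 1 y) * Fl u (-(Real.sqrt h • y)) := by
    rw [hJ, ← (Measure.measurePreserving_neg
      (volume : Measure (EuclideanSpace ℝ (Fin d)))).lintegral_comp hHm]
    refine lintegral_congr fun y => ?_
    rw [gauss_neg, smul_neg]
  ---------------------------------------------------------------
  -- Part 2 : the left-hand side
  ---------------------------------------------------------------
  have hKnn : ∀ z : EuclideanSpace ℝ (Fin d),
      0 ≤ Real.exp (3 * ‖z‖ ^ 2 / 8) * gauss d 1 z * (1 / Real.sqrt h) :=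
    fun z => mul_nonneg (mul_nonneg (Real.exp_nonneg _) (hG1nn z)) (by positivity)
  have humz : Measurable fun p : (EuclideanSpace ℝ (Fin d)) × (EuclideanSpace ℝ (Fin d)) =>
      u (p.1 - Real.sqrt h • p.2) :=
    hu_meas.comp (measurable_fst.sub (measurable_snd.const_smul (Real.sqrt h)))
  have hjoint1 : Measurable fun p : (EuclideanSpace ℝ (Fin d)) × (EuclideanSpace ℝ (Fin d)) =>
      ENNReal.ofReal (Real.exp (3 * ‖p.2‖ ^ 2 / 8) * gauss d 1 p.2 * (1 / Real.sqrt h) *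
        ((1 - u p.1) * u (p.1 - Real.sqrt h • p.2)
          + u p.1 * (1 - u (p.1 - Real.sqrt h • p.2)))) := by
    refine Measurable.ennreal_ofReal (Measurable.mul (Measurable.mul (Measurable.mul ?_ ?_)
      measurable_const) ?_)
    · exact ((((measurable_norm.pow_const 2).const_mul 3).div_const 8).exp).comp measurable_snd
    · exact hG1m.comp measurable_snd
    · exact ((measurable_const.sub (hu_meas.comp measurable_fst)).mul humz).add
        ((hu_meas.comp measurable_fst).mul (measurable_const.sub humz))
  have swap1 : (∫⁻ x, ∫⁻ z, ENNReal.ofReal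
        (Real.exp (3 * ‖z‖ ^ 2 / 8) * gauss d 1 z * (1 / Real.sqrt h) *
          ((1 - u x) * u (x - Real.sqrt h • z) + u x * (1 - u (x - Real.sqrt h • z)))))
      = ∫⁻ z, ∫⁻ x, ENNReal.ofReal
        (Real.exp (3 * ‖z‖ ^ 2 / 8) * gauss d 1 z * (1 / Real.sqrt h) *
          ((1 - u x) * u (x - Real.sqrt h • z) + u x * (1 - u (x - Real.sqrt h • z)))) :=
    lintegral_lintegral_swap hjoint1.aemeasurable
  have hABm : ∀ z : EuclideanSpace ℝ (Fin d), Measurable fun x =>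
      ENNReal.ofReal ((1 - u x) * u (x - Real.sqrt h • z)
        + u x * (1 - u (x - Real.sqrt h • z))) := by
    intro z
    have hm2 : Measurable fun x : EuclideanSpace ℝ (Fin d) => u (x - Real.sqrt h • z) :=
      hu_meas.comp (measurable_sub_const _)
    exact (((measurable_const.sub hu_meas).mul hm2).add
      (hu_meas.mul (measurable_const.sub hm2))).ennreal_ofReal
  have hinner : ∀ z : EuclideanSpace ℝ (Fin d), (∫⁻ x, ENNReal.ofReal
        (Real.exp (3 * ‖z‖ ^ 2 / 8) * gauss d 1 z * (1 / Real.sqrt h) *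
          ((1 - u x) * u (x - Real.sqrt h • z) + u x * (1 - u (x - Real.sqrt h • z)))))
      = ENNReal.ofReal (Real.exp (3 * ‖z‖ ^ 2 / 8) * gauss d 1 z * (1 / Real.sqrt h)) *
          (Fl u (-(Real.sqrt h • z)) + Fl u (Real.sqrt h • z)) := by
    intro z
    simp_rw [ENNReal.ofReal_mul (hKnn z)]
    rw [lintegral_const_mul _ (hABm z)]
    congr 1
    have hsplit : ∀ x : EuclideanSpace ℝ (Fin d),
        ENNReal.ofReal ((1 - u x) * u (x - Real.sqrt h • z)
          + u x * (1 - u (x - Real.sqrt h • z)))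
        = ENNReal.ofReal ((1 - u x) * u (x - Real.sqrt h • z))
          + ENNReal.ofReal (u x * (1 - u (x - Real.sqrt h • z))) :=
      fun x => ENNReal.ofReal_add (hqnn _ _) (hpnn _ _)
    have hAmz : Measurable fun x : EuclideanSpace ℝ (Fin d) =>
        ENNReal.ofReal ((1 - u x) * u (x - Real.sqrt h • z)) :=
      ((measurable_const.sub hu_meas).mul
        (hu_meas.comp (measurable_sub_const _))).ennreal_ofReal
    rw [lintegral_congr hsplit, lintegral_add_left hAmz,
      Fl_trans hu_meas (Real.sqrt h • z)]
    rfl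
  have hLm : Measurable fun z : EuclideanSpace ℝ (Fin d) =>
      ENNReal.ofReal (Real.exp (3 * ‖z‖ ^ 2 / 8) * gauss d 1 z * (1 / Real.sqrt h)) *
        (Fl u (-(Real.sqrt h • z)) + Fl u (Real.sqrt h • z)) := by
    refine Measurable.mul ?_ (Measurable.add ?_ ?_)
    · exact ((((((measurable_norm.pow_const 2).const_mul 3).div_const 8).exp).mul hG1m).mul
        measurable_const).ennreal_ofReal
    · exact hFlm.comp ((measurable_id.const_smul (Real.sqrt h)).neg)
    · exact hFlm.comp (measurable_id.const_smul (Real.sqrt h))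
  have scale2 := lint_smul _ hLm (by norm_num : (0:ℝ) < 2)
  have hsmul2 : ∀ y : EuclideanSpace ℝ (Fin d),
      Real.sqrt h • ((2:ℝ) • y) = Real.sqrt h • y + Real.sqrt h • y := by
    intro y
    rw [smul_smul, show Real.sqrt h * 2 = Real.sqrt h + Real.sqrt h by ring, add_smul]
  have hbound : ∀ y : EuclideanSpace ℝ (Fin d),
      ENNReal.ofReal (Real.exp (3 * ‖(2:ℝ) • y‖ ^ 2 / 8) * gauss d 1 ((2:ℝ) • y)
          * (1 / Real.sqrt h)) *
        (Fl u (-(Real.sqrt h • (2:ℝ) • y)) + Fl u (Real.sqrt h • (2:ℝ) • y))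
      ≤ ENNReal.ofReal (1 / Real.sqrt h) * 2 *
        (ENNReal.ofReal (gauss d 1 y) *
          (Fl u (-(Real.sqrt h • y)) + Fl u (Real.sqrt h • y))) := by
    intro y
    rw [k_scale y]
    have f1 : Fl u (Real.sqrt h • (2:ℝ) • y) ≤ 2 * Fl u (Real.sqrt h • y) := by
      rw [hsmul2]; exact Fl_half hu_meas hu_range _
    have f2 : Fl u (-(Real.sqrt h • (2:ℝ) • y)) ≤ 2 * Fl u (-(Real.sqrt h • y)) := by
      rw [hsmul2, neg_add]; exact Fl_half hu_meas hu_range _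
    calc ENNReal.ofReal (gauss d 1 y * (1 / Real.sqrt h)) *
          (Fl u (-(Real.sqrt h • (2:ℝ) • y)) + Fl u (Real.sqrt h • (2:ℝ) • y))
        ≤ ENNReal.ofReal (gauss d 1 y * (1 / Real.sqrt h)) *
          (2 * Fl u (-(Real.sqrt h • y)) + 2 * Fl u (Real.sqrt h • y)) :=
          mul_le_mul_right (add_le_add f2 f1) _
      _ = _ := by
          rw [ENNReal.ofReal_mul (hG1nn y)]
          ring
  have hmeas2 : Measurable fun y : EuclideanSpace ℝ (Fin d) =>
      ENNReal.ofReal (gauss d 1 y) *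
        (Fl u (-(Real.sqrt h • y)) + Fl u (Real.sqrt h • y)) :=
    (hG1m.ennreal_ofReal).mul
      ((hFlm.comp ((measurable_id.const_smul (Real.sqrt h)).neg)).add
        (hFlm.comp (measurable_id.const_smul (Real.sqrt h))))
  have hmono : (∫⁻ y : EuclideanSpace ℝ (Fin d),
        ENNReal.ofReal (Real.exp (3 * ‖(2:ℝ) • y‖ ^ 2 / 8) * gauss d 1 ((2:ℝ) • y)
            * (1 / Real.sqrt h)) *
          (Fl u (-(Real.sqrt h • (2:ℝ) • y)) + Fl u (Real.sqrt h • (2:ℝ) • y)))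
      ≤ ENNReal.ofReal (1 / Real.sqrt h) * 2 *
        ∫⁻ y, ENNReal.ofReal (gauss d 1 y) *
          (Fl u (-(Real.sqrt h • y)) + Fl u (Real.sqrt h • y)) := by
    rw [← lintegral_const_mul _ hmeas2]
    exact lintegral_mono hbound
  have hsum : (∫⁻ y, ENNReal.ofReal (gauss d 1 y) *
        (Fl u (-(Real.sqrt h • y)) + Fl u (Real.sqrt h • y)))
      = 2 * ENNReal.ofReal ((∫ x, u x) - ∫ x, u x * conv d (gauss d h) u x) := by
    have hdist : ∀ y : EuclideanSpace ℝ (Fin d),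
        ENNReal.ofReal (gauss d 1 y) *
          (Fl u (-(Real.sqrt h • y)) + Fl u (Real.sqrt h • y))
        = ENNReal.ofReal (gauss d 1 y) * Fl u (-(Real.sqrt h • y))
          + ENNReal.ofReal (gauss d 1 y) * Fl u (Real.sqrt h • y) := fun y => mul_add _ _ _
    have hBm : Measurable fun y : EuclideanSpace ℝ (Fin d) =>
        ENNReal.ofReal (gauss d 1 y) * Fl u (-(Real.sqrt h • y)) :=
      (hG1m.ennreal_ofReal).mul (hFlm.comp ((measurable_id.const_smul (Real.sqrt h)).neg))
    rw [lintegral_congr hdist, lintegral_add_left hBm, ← hJneg, ← hJ, two_mul]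
  -- final assembly
  calc (∫⁻ x, ∫⁻ z, ENNReal.ofReal
        (Real.exp (3 * ‖z‖ ^ 2 / 8) * gauss d 1 z * (1 / Real.sqrt h) *
          ((1 - u x) * u (x - Real.sqrt h • z) + u x * (1 - u (x - Real.sqrt h • z)))))
      = ∫⁻ z, ENNReal.ofReal (Real.exp (3 * ‖z‖ ^ 2 / 8) * gauss d 1 z * (1 / Real.sqrt h)) *
          (Fl u (-(Real.sqrt h • z)) + Fl u (Real.sqrt h • z)) := by
        rw [swap1]; exact lintegral_congr hinner
    _ = ENNReal.ofReal ((2:ℝ) ^ d) * ∫⁻ y : EuclideanSpace ℝ (Fin d),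
          ENNReal.ofReal (Real.exp (3 * ‖(2:ℝ) • y‖ ^ 2 / 8) * gauss d 1 ((2:ℝ) • y)
              * (1 / Real.sqrt h)) *
            (Fl u (-(Real.sqrt h • (2:ℝ) • y)) + Fl u (Real.sqrt h • (2:ℝ) • y)) := scale2
    _ ≤ ENNReal.ofReal ((2:ℝ) ^ d) * (ENNReal.ofReal (1 / Real.sqrt h) * 2 *
          (2 * ENNReal.ofReal ((∫ x, u x) - ∫ x, u x * conv d (gauss d h) u x))) := by
        rw [← hsum]
        exact mul_le_mul_right hmono _
    _ = ENNReal.ofReal ((2 ^ (d + 2) / Real.sqrt h) *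
          ((∫ x, u x) - ∫ x, u x * conv d (gauss d h) u x)) := by
        rw [show ENNReal.ofReal ((2:ℝ)^d) * (ENNReal.ofReal (1/Real.sqrt h) * 2 *
              (2 * ENNReal.ofReal ((∫ x, u x) - ∫ x, u x * conv d (gauss d h) u x))) =
            ((2:ℝ≥0∞) * 2 * ENNReal.ofReal ((2:ℝ)^d) * ENNReal.ofReal (1/Real.sqrt h)) *
              ENNReal.ofReal ((∫ x, u x) - ∫ x, u x * conv d (gauss d h) u x) from by ring]
        have c0 : (2:ℝ≥0∞) = ENNReal.ofReal 2 := by norm_num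
        have c1 : (2:ℝ≥0∞) * 2 * ENNReal.ofReal ((2:ℝ)^d) * ENNReal.ofReal (1/Real.sqrt h)
            = ENNReal.ofReal (2^(d+2)/Real.sqrt h) := by
          rw [c0, ← ENNReal.ofReal_mul (by positivity),
            ← ENNReal.ofReal_mul (by positivity), ← ENNReal.ofReal_mul (by positivity)]
          congr 1
          rw [pow_add]
          field_simp
        rw [c1, ← ENNReal.ofReal_mul (by positivity)]
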